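/- Let p be a prime and let X, Y be subsets of Z/pZ with |X|·|Y| > 2p. Then every element of Z/pZ can be written as x₁y₁ + x₂y₂ + ... + x₈y₈ with xᵢ ∈ X and yᵢ ∈ Y. -/

import Mathlib

open Finset

variable {p : ℕ}

/-- Pigeonhole covering: two sets with combined size exceeding `p` sum to everything. -/
lemma glib_cover [NeZero p] (U V : Finset (ZMod p)) (h : p < U.card + V.card) (z : ZMod p) :
    ∃ u ∈ U, ∃ v ∈ V, u + v = z := by
  have hne : (U ∩ V.image (fun v => z - v)).Nonempty := by
    by_contra h0
    rw [Finset.not_nonempty_iff_eq_empty] at h0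
    have hdisj : Disjoint U (V.image (fun v => z - v)) :=
      Finset.disjoint_iff_inter_eq_empty.2 h0
    have hcard : (U ∪ V.image (fun v => z - v)).card = U.card + (V.image (fun v => z - v)).card :=
      Finset.card_union_of_disjoint hdisj
    have hVcard : (V.image (fun v => z - v)).card = V.card :=
      Finset.card_image_of_injective _ (fun a b hab => by simpa using hab)
    have hle : (U ∪ V.image (fun v => z - v)).card ≤ Fintype.card (ZMod p) :=
      Finset.card_le_univ _
    rw [ZMod.card] at hle
    omega
  obtain ⟨u, hu⟩ := hne
  rw [Finset.mem_inter] at hu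
  obtain ⟨v, hv, hvu⟩ := Finset.mem_image.1 hu.2
  exact ⟨u, hu.1, v, hv, by rw [← hvu]; ring⟩

/-- Cauchy-Schwarz for fibers of a map. -/
lemma glib_cs {α β : Type*} [DecidableEq α] [DecidableEq β] (D : Finset α) (f : α → β) :
    D.card ^ 2 ≤ (D.image f).card * ((D ×ˢ D).filter (fun x => f x.1 = f x.2)).card := by
  classical
  set I := D.image f with hI
  have h1 : ∑ v ∈ I, (D.filter (fun q => f q = v)).card = D.card :=
    (Finset.card_eq_sum_card_fiberwise (fun x hx => Finset.mem_image_of_mem f hx)).symm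
  have h2 : ∑ v ∈ I, ((D.filter (fun q => f q = v)).card) ^ 2
      = ((D ×ˢ D).filter (fun x => f x.1 = f x.2)).card := by
    rw [Finset.card_eq_sum_card_fiberwise
      (f := fun x => f x.1) (t := I)
      (fun x hx => by
        rw [Finset.mem_coe, Finset.mem_filter, Finset.mem_product] at hx
        exact Finset.mem_image_of_mem f hx.1.1)]
    refine Finset.sum_congr rfl (fun v hv => ?_)
    have : ((D ×ˢ D).filter (fun x => f x.1 = f x.2)).filter (fun x => f x.1 = v)
        = (D.filter (fun q => f q = v)) ×ˢ (D.filter (fun q => f q = v)) := by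
      ext x
      simp only [Finset.mem_filter, Finset.mem_product]
      constructor
      · rintro ⟨⟨⟨h1', h2'⟩, h3⟩, h4⟩
        exact ⟨⟨h1', h4⟩, ⟨h2', by rw [← h3]; exact h4⟩⟩
      · rintro ⟨⟨h1', h2'⟩, ⟨h3, h4⟩⟩
        exact ⟨⟨⟨h1', h3⟩, by rw [h2', h4]⟩, h2'⟩
    rw [this, Finset.card_product, sq]
  have h3 : (∑ v ∈ I, ((D.filter (fun q => f q = v)).card : ℤ)) ^ 2
      ≤ (I.card : ℤ) * ∑ v ∈ I, ((D.filter (fun q => f q = v)).card : ℤ) ^ 2 :=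
    sq_sum_le_card_mul_sum_sq
  have := h3
  rw [← Nat.cast_sum] at this
  rw [h1] at this
  have h4 : ((D.card : ℤ)) ^ 2 ≤ (I.card : ℤ) * ((((D ×ˢ D).filter (fun x => f x.1 = f x.2)).card : ℤ)) := by
    calc ((D.card : ℤ)) ^ 2 ≤ (I.card : ℤ) * ∑ v ∈ I, ((D.filter (fun q => f q = v)).card : ℤ) ^ 2 := this
    _ = (I.card : ℤ) * ((((D ×ˢ D).filter (fun x => f x.1 = f x.2)).card : ℤ)) := by
        rw [← h2]; push_cast; ring
  exact_mod_cast h4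

lemma glib_arith (p m n : ℕ) (hp3 : 3 ≤ p) (hm : 3 ≤ m) (hn : 2 ≤ n) (hAB : p + 1 ≤ m * n) :
    (p + 1) * ((p - 1) + (m - 1) * n) ≤ 2 * (p - 1) * (m * n) := by
  obtain ⟨q, rfl⟩ : ∃ q, p = q + 1 := ⟨p - 1, by omega⟩
  obtain ⟨m', rfl⟩ : ∃ m', m = m' + 1 := ⟨m - 1, by omega⟩
  have hq2 : 2 ≤ q := by omega
  have hm2 : 2 ≤ m' := by omega
  have hABq : q + 2 ≤ m' * n + n := by
    have h : (m' + 1) * n = m' * n + n := by ring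
    omega
  simp only [Nat.add_sub_cancel]
  zify
  nlinarith [mul_nonneg (by omega : (0:ℤ) ≤ (q:ℤ) - 2)
      (by push_cast; omega : (0:ℤ) ≤ (m':ℤ) * n + n - ((q:ℤ) + 2)),
    mul_nonneg (by positivity : (0:ℤ) ≤ (q:ℤ) + 2) (by
      push_cast; omega : (0:ℤ) ≤ (n:ℤ) - 2)]


lemma glib_sum_ite_const {α : Type*} [DecidableEq α] (s : Finset α) (a : α) (ha : a ∈ s)
    (C1 C2 : ℕ) : (∑ x ∈ s, (if a = x then C1 else C2)) = C1 + (s.card - 1) * C2 := by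
  classical
  rw [Finset.sum_ite]
  have h1 : s.filter (fun x => a = x) = {a} := by
    ext x
    simp only [Finset.mem_filter, Finset.mem_singleton]
    constructor
    · rintro ⟨_, h⟩; exact h.symm
    · rintro rfl; exact ⟨ha, rfl⟩
  have h2 : s.filter (fun x => ¬ a = x) = s.erase a := by
    ext x
    simp only [Finset.mem_filter, Finset.mem_erase]
    tauto
  rw [h1, h2]
  simp [Finset.card_erase_of_mem ha, mul_comm]

lemma glib_good (hp : p.Prime) (A B : Finset (ZMod p)) (hA : 3 ≤ A.card) (hB : 2 ≤ B.card)
    (hAB : p + 1 ≤ A.card * B.card) :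
    ∃ w : ZMod p, w ≠ 0 ∧
      p + 1 ≤ 2 * (((A ×ˢ B).image (fun q => w * q.1 + q.2)).card) ∧
      p + 1 ≤ 2 * (((A ×ˢ B).image (fun q => w * q.1 - q.2)).card) := by
  classical
  haveI : Fact p.Prime := ⟨hp⟩
  haveI : NeZero p := ⟨hp.ne_zero⟩
  have hp3 : 3 ≤ p := by
    have := Finset.card_le_univ A
    rw [ZMod.card] at this
    omega
  set m := A.card with hm
  set n := B.card with hn
  set D := A ×ˢ B with hD
  have hDcard : D.card = m * n := Finset.card_product A B
  set W : Finset (ZMod p) := Finset.univ.erase 0 with hW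
  have hWcard : W.card = p - 1 := by
    rw [hW, Finset.card_erase_of_mem (Finset.mem_univ _), Finset.card_univ, ZMod.card]
  have hWne : W.Nonempty := ⟨1, by simp [hW]⟩
  set E : ZMod p → ℕ := fun w =>
    ((D ×ˢ D).filter (fun x => w * (x.1.1 - x.2.1) = x.1.2 - x.2.2)).card with hE
  have hsum : ∑ w ∈ W, E w ≤ (m * n) * ((p - 1) + (m - 1) * n) := by
    have hswap : ∑ w ∈ W, E w
        = ∑ x ∈ D ×ˢ D, (W.filter (fun w => w * (x.1.1 - x.2.1) = x.1.2 - x.2.2)).card := by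
      simp only [hE, Finset.card_filter]
      rw [Finset.sum_comm]
    rw [hswap]
    have hbound : ∀ x ∈ D ×ˢ D,
        (W.filter (fun w => w * (x.1.1 - x.2.1) = x.1.2 - x.2.2)).card
          ≤ (if x.1.1 = x.2.1 then (if x.1.2 = x.2.2 then p - 1 else 0) else 1) := by
      intro x _
      by_cases h1 : x.1.1 = x.2.1
      · by_cases h2 : x.1.2 = x.2.2
        · simp only [h1, h2, if_true]
          exact le_trans (Finset.card_filter_le _ _) (le_of_eq hWcard)
        · have hempty : (W.filter (fun w => w * (x.1.1 - x.2.1) = x.1.2 - x.2.2)) = ∅ := by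
            rw [Finset.filter_eq_empty_iff]
            intro w _
            rw [h1, sub_self, mul_zero]
            intro hc
            exact h2 (by linear_combination -hc)
          rw [hempty]
          simp
      · simp only [h1, if_false]
        apply Finset.card_le_one.2
        intro w hw w' hw'
        rw [Finset.mem_filter] at hw hw'
        exact mul_right_cancel₀ (sub_ne_zero.2 h1) (hw.2.trans hw'.2.symm)
    calc ∑ x ∈ D ×ˢ D, (W.filter (fun w => w * (x.1.1 - x.2.1) = x.1.2 - x.2.2)).card
        ≤ ∑ x ∈ D ×ˢ D, (if x.1.1 = x.2.1 then (if x.1.2 = x.2.2 then p - 1 else 0) else 1) :=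
          Finset.sum_le_sum hbound
      _ = (m * n) * ((p - 1) + (m - 1) * n) := by
          rw [Finset.sum_product]
          have inner : ∀ x1 ∈ D,
              (∑ x2 ∈ D, (if x1.1 = x2.1 then (if x1.2 = x2.2 then p - 1 else 0) else 1))
                = (p - 1) + (m - 1) * n := by
            intro x1 hx1
            rw [hD, Finset.mem_product] at hx1
            rw [hD, Finset.sum_product]
            have inner2 : ∀ a' ∈ A,
                (∑ b' ∈ B, (if x1.1 = a' then (if x1.2 = b' then p - 1 else 0) else 1))
                  = (if x1.1 = a' then p - 1 else n) := by
              intro a' _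
              by_cases h : x1.1 = a'
              · simp only [h, if_true]
                have := glib_sum_ite_const B x1.2 hx1.2 (p-1) 0
                rw [this]
                simp
              · simp [h, hn]
            rw [Finset.sum_congr rfl inner2, glib_sum_ite_const A x1.1 hx1.1 (p-1) n]
          rw [Finset.sum_congr rfl inner, Finset.sum_const, hDcard, smul_eq_mul]
  -- minimizer
  obtain ⟨w0, hw0W, hw0min⟩ := Finset.exists_min_image W E hWne
  have hw0 : w0 ≠ 0 := by
    rw [hW, Finset.mem_erase] at hw0W
    exact hw0W.1
  have hmin : (p - 1) * E w0 ≤ (m * n) * ((p - 1) + (m - 1) * n) := by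
    calc (p - 1) * E w0 = W.card * E w0 := by rw [hWcard]
      _ ≤ ∑ w ∈ W, E w := by
          simpa using Finset.card_nsmul_le_sum W E (E w0) hw0min
      _ ≤ _ := hsum
  have hEpos : 0 < E w0 := by
    have hAne : A.Nonempty := Finset.card_pos.1 (by omega)
    have hBne : B.Nonempty := Finset.card_pos.1 (by omega)
    obtain ⟨a, ha⟩ := hAne
    obtain ⟨b, hb⟩ := hBne
    apply Finset.card_pos.2
    refine ⟨((a,b),(a,b)), ?_⟩
    rw [Finset.mem_filter]
    constructor
    · rw [Finset.mem_product]
      constructor <;> (rw [hD, Finset.mem_product]; exact ⟨ha, hb⟩)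
    · simp
  have hG : (p + 1) * ((p - 1) + (m - 1) * n) ≤ 2 * (p - 1) * (m * n) :=
    glib_arith p m n hp3 hA hB hAB
  have key : ∀ I : Finset (ZMod p), (m * n) ^ 2 ≤ I.card * E w0 → p + 1 ≤ 2 * I.card := by
    intro I hCS
    have hKpos : 0 < (p - 1) * E w0 := by
      have : 0 < p - 1 := by omega
      positivity
    apply Nat.le_of_mul_le_mul_right _ hKpos
    calc (p + 1) * ((p - 1) * E w0)
        ≤ (p + 1) * ((m * n) * ((p - 1) + (m - 1) * n)) := Nat.mul_le_mul_left _ hmin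
      _ = (m * n) * ((p + 1) * ((p - 1) + (m - 1) * n)) := by ring
      _ ≤ (m * n) * (2 * (p - 1) * (m * n)) := Nat.mul_le_mul_left _ hG
      _ = 2 * (p - 1) * (m * n) ^ 2 := by ring
      _ ≤ 2 * (p - 1) * (I.card * E w0) := Nat.mul_le_mul_left _ hCS
      _ = 2 * I.card * ((p - 1) * E w0) := by ring
  -- the minus image
  have hminusEq : ((D ×ˢ D).filter (fun x => w0 * x.1.1 - x.1.2 = w0 * x.2.1 - x.2.2))
      = (D ×ˢ D).filter (fun x => w0 * (x.1.1 - x.2.1) = x.1.2 - x.2.2) := by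
    apply Finset.filter_congr
    intro x _
    constructor <;> (intro h; linear_combination h)
  have hminus : p + 1 ≤ 2 * (((A ×ˢ B).image (fun q => w0 * q.1 - q.2)).card) := by
    apply key
    have := glib_cs D (fun q => w0 * q.1 - q.2)
    rw [hDcard] at this
    calc (m * n) ^ 2 ≤ ((D.image (fun q => w0 * q.1 - q.2)).card)
          * ((D ×ˢ D).filter (fun x => w0 * x.1.1 - x.1.2 = w0 * x.2.1 - x.2.2)).card := this
      _ = _ := by rw [hminusEq]
  -- the plus image: needs a swap bijection
  have hplusEq : ((D ×ˢ D).filter (fun x => w0 * x.1.1 + x.1.2 = w0 * x.2.1 + x.2.2))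
      = (D ×ˢ D).filter (fun x => w0 * (x.1.1 - x.2.1) = x.2.2 - x.1.2) := by
    apply Finset.filter_congr
    intro x _
    constructor <;> (intro h; linear_combination h)
  have hswapcard : ((D ×ˢ D).filter
        (fun (x : (ZMod p × ZMod p) × (ZMod p × ZMod p)) => w0 * (x.1.1 - x.2.1) = x.2.2 - x.1.2)).card
      = ((D ×ˢ D).filter
        (fun (x : (ZMod p × ZMod p) × (ZMod p × ZMod p)) => w0 * (x.1.1 - x.2.1) = x.1.2 - x.2.2)).card := by
    set sw : ((ZMod p × ZMod p) × (ZMod p × ZMod p)) → ((ZMod p × ZMod p) × (ZMod p × ZMod p)) :=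
      fun x => ((x.1.1, x.2.2), (x.2.1, x.1.2)) with hsw
    apply Finset.card_bij' (fun x _ => sw x) (fun x _ => sw x)
    · intro x hx
      simp only [Finset.mem_filter, Finset.mem_product, hD, hsw] at hx ⊢
      obtain ⟨⟨⟨ha1, hb1⟩, ha2, hb2⟩, hcond⟩ := hx
      exact ⟨⟨⟨ha1, hb2⟩, ha2, hb1⟩, hcond⟩
    · intro x hx
      simp only [Finset.mem_filter, Finset.mem_product, hD, hsw] at hx ⊢
      obtain ⟨⟨⟨ha1, hb1⟩, ha2, hb2⟩, hcond⟩ := hx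
      exact ⟨⟨⟨ha1, hb2⟩, ha2, hb1⟩, hcond⟩
    · intro x _; rfl
    · intro x _; rfl
  have hplus : p + 1 ≤ 2 * (((A ×ˢ B).image (fun q => w0 * q.1 + q.2)).card) := by
    apply key
    have := glib_cs D (fun q => w0 * q.1 + q.2)
    rw [hDcard] at this
    calc (m * n) ^ 2 ≤ ((D.image (fun q => w0 * q.1 + q.2)).card)
          * ((D ×ˢ D).filter (fun x => w0 * x.1.1 + x.1.2 = w0 * x.2.1 + x.2.2)).card := this
      _ = _ := by rw [hplusEq, hswapcard]
  exact ⟨w0, hw0, hplus, hminus⟩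

lemma glib_reach [Fact p.Prime] [NeZero p] (A B' : Finset (ZMod p)) (w s t : ZMod p) (ht : t ≠ 0)
    (hst : s = w * t)
    (himg : p + 1 ≤ 2 * (((A ×ˢ B').image (fun q => w * q.1 + q.2)).card)) (z : ZMod p) :
    ∃ a ∈ A, ∃ b ∈ B', ∃ a' ∈ A, ∃ b' ∈ B', (a * s + b * t) + (a' * s + b' * t) = z := by
  classical
  set X := (A ×ˢ B').image (fun q => q.1 * s + q.2 * t) with hX
  have himgeq : X = (((A ×ˢ B').image (fun q => w * q.1 + q.2)).image (fun v => t * v)) := by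
    rw [hX, Finset.image_image]
    apply Finset.image_congr
    intro q _
    simp only [Function.comp_apply]
    rw [hst]; ring
  have hcardX : X.card = ((A ×ˢ B').image (fun q => w * q.1 + q.2)).card := by
    rw [himgeq, Finset.card_image_of_injective _ (mul_right_injective₀ ht)]
  have hcover : p < X.card + X.card := by omega
  obtain ⟨u, hu, v, hv, huv⟩ := glib_cover X X hcover z
  rw [hX, Finset.mem_image] at hu hv
  obtain ⟨q, hq, hqu⟩ := hu
  obtain ⟨q', hq', hqv⟩ := hv
  rw [Finset.mem_product] at hq hq'
  exact ⟨q.1, hq.1, q.2, hq.2, q'.1, hq'.1, q'.2, hq'.2, by rw [hqu, hqv, huv]⟩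



section vec8
variable {α : Type*} (a₀ a₁ a₂ a₃ a₄ a₅ a₆ a₇ : α)
lemma glib_vec8_0 : ![a₀, a₁, a₂, a₃, a₄, a₅, a₆, a₇] 0 = a₀ := rfl
lemma glib_vec8_1 : ![a₀, a₁, a₂, a₃, a₄, a₅, a₆, a₇] 1 = a₁ := rfl
lemma glib_vec8_2 : ![a₀, a₁, a₂, a₃, a₄, a₅, a₆, a₇] 2 = a₂ := rfl
lemma glib_vec8_3 : ![a₀, a₁, a₂, a₃, a₄, a₅, a₆, a₇] 3 = a₃ := rfl
lemma glib_vec8_4 : ![a₀, a₁, a₂, a₃, a₄, a₅, a₆, a₇] 4 = a₄ := rfl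
lemma glib_vec8_5 : ![a₀, a₁, a₂, a₃, a₄, a₅, a₆, a₇] 5 = a₅ := rfl
lemma glib_vec8_6 : ![a₀, a₁, a₂, a₃, a₄, a₅, a₆, a₇] 6 = a₆ := rfl
lemma glib_vec8_7 : ![a₀, a₁, a₂, a₃, a₄, a₅, a₆, a₇] 7 = a₇ := rfl
end vec8

theorem glibichuk (p : ℕ) (hp : p.Prime) (X Y : Finset (ZMod p))
    (hXY : 2 * p < X.card * Y.card) (z : ZMod p) :
    ∃ x y : Fin 8 → ZMod p, (∀ i, x i ∈ X) ∧ (∀ i, y i ∈ Y) ∧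
      ∑ i, x i * y i = z := by
  classical
  haveI : Fact p.Prime := ⟨hp⟩
  haveI : NeZero p := ⟨hp.ne_zero⟩
  have hXp : X.card ≤ p := by
    have := Finset.card_le_univ X
    rwa [ZMod.card] at this
  have hYp : Y.card ≤ p := by
    have := Finset.card_le_univ Y
    rwa [ZMod.card] at this
  have hX3 : 3 ≤ X.card := by
    by_contra h
    push_neg at h
    have : X.card * Y.card ≤ 2 * p :=
      calc X.card * Y.card ≤ 2 * Y.card := Nat.mul_le_mul_right _ (by omega)
        _ ≤ 2 * p := Nat.mul_le_mul_left _ hYp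
    omega
  have hY3 : 3 ≤ Y.card := by
    by_contra h
    push_neg at h
    have : X.card * Y.card ≤ X.card * 2 := Nat.mul_le_mul_left _ (by omega)
    have h2 : X.card * 2 ≤ p * 2 := Nat.mul_le_mul_right _ hXp
    omega
  set B1 := Y ∩ Y.image (fun y => -y) with hB1
  set B2 := Y \ Y.image (fun y => -y) with hB2
  have hmemB1 : ∀ b, b ∈ B1 ↔ b ∈ Y ∧ -b ∈ Y := by
    intro b
    rw [hB1, Finset.mem_inter, Finset.mem_image]
    constructor
    · rintro ⟨hb, y, hy, hyb⟩
      refine ⟨hb, ?_⟩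
      rw [← hyb]
      simpa using hy
    · rintro ⟨hb, hnb⟩
      exact ⟨hb, ⟨-b, hnb, by simp⟩⟩
  have hmemB2 : ∀ b, b ∈ B2 ↔ b ∈ Y ∧ ¬(-b ∈ Y) := by
    intro b
    rw [hB2, Finset.mem_sdiff, Finset.mem_image]
    constructor
    · rintro ⟨hb, hn⟩
      refine ⟨hb, fun hc => hn ⟨-b, hc, by simp⟩⟩
    · rintro ⟨hb, hn⟩
      refine ⟨hb, fun ⟨y, hy, hyb⟩ => hn ?_⟩
      rw [← hyb]
      simpa using hy
  have hsplitc : B1.card + B2.card = Y.card := Finset.card_inter_add_card_sdiff Y _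
  by_cases hcase : B2.card ≤ B1.card
  · -- symmetric case
    have hcardB' : p + 1 ≤ X.card * B1.card := by
      have hY2 : Y.card ≤ 2 * B1.card := by omega
      have : X.card * Y.card ≤ X.card * (2 * B1.card) := Nat.mul_le_mul_left _ hY2
      have h2 : X.card * (2 * B1.card) = 2 * (X.card * B1.card) := by ring
      omega
    have hB'2 : 2 ≤ B1.card := by
      by_contra h
      push_neg at h
      have : X.card * B1.card ≤ X.card * 1 := Nat.mul_le_mul_left _ (by omega)
      omega
    obtain ⟨w, hw, hplus, _⟩ := glib_good hp X B1 hX3 hB'2 hcardB'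
    have hcol : ∃ q1 ∈ X ×ˢ B1, ∃ q2 ∈ X ×ˢ B1, q1 ≠ q2 ∧
        w * q1.1 - q1.2 = w * q2.1 - q2.2 := by
      apply Finset.exists_ne_map_eq_of_card_lt_of_maps_to
      · rw [Finset.card_product, Finset.card_univ, ZMod.card]
        omega
      · intro a _
        exact Finset.mem_univ _
    obtain ⟨q1, hq1, q2, hq2, hne, heq⟩ := hcol
    rw [Finset.mem_product] at hq1 hq2
    have ht0 : q1.1 - q2.1 ≠ 0 := by
      intro h0
      have h1 : q1.1 = q2.1 := by linear_combination h0
      apply hne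
      have h2 : q1.2 = q2.2 := by linear_combination w * h1 - heq
      exact Prod.ext h1 h2
    have hst : q1.2 - q2.2 = w * (q1.1 - q2.1) := by linear_combination -heq
    obtain ⟨a, ha, b, hb, a', ha', b', hb', habz⟩ :=
      glib_reach X B1 w (q1.2 - q2.2) (q1.1 - q2.1) ht0 hst hplus z
    refine ⟨![a, a, q1.1, q2.1, a', a', q1.1, q2.1],
      ![q1.2, -q2.2, b, -b, q1.2, -q2.2, b', -b'], ?_, ?_, ?_⟩
    · intro i
      fin_cases i <;> simp <;>
        first
          | exact ha | exact ha' | exact hq1.1 | exact hq2.1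
    · have hYmem : ∀ c, c ∈ B1 → c ∈ Y ∧ -c ∈ Y := fun c hc => (hmemB1 c).1 hc
      intro i
      fin_cases i <;> simp <;>
        first
          | exact (hYmem _ hq1.2).1 | exact (hYmem _ hq2.2).2 | exact (hYmem _ hb).1
          | exact (hYmem _ hb).2 | exact (hYmem _ hb').1 | exact (hYmem _ hb').2
    · rw [Fin.sum_univ_eight]
      simp only [glib_vec8_0, glib_vec8_1, glib_vec8_2, glib_vec8_3, glib_vec8_4,
        glib_vec8_5, glib_vec8_6, glib_vec8_7]
      linear_combination habz
  · -- antisymmetric case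
    push_neg at hcase
    have hcardB' : p + 1 ≤ X.card * B2.card := by
      have hY2 : Y.card ≤ 2 * B2.card := by omega
      have : X.card * Y.card ≤ X.card * (2 * B2.card) := Nat.mul_le_mul_left _ hY2
      have h2 : X.card * (2 * B2.card) = 2 * (X.card * B2.card) := by ring
      omega
    have hB'2 : 2 ≤ B2.card := by
      by_contra h
      push_neg at h
      have : X.card * B2.card ≤ X.card * 1 := Nat.mul_le_mul_left _ (by omega)
      omega
    obtain ⟨w, hw, hplus, hminus⟩ := glib_good hp X B2 hX3 hB'2 hcardB'
    obtain ⟨v1, hv1, v2, hv2, hv12⟩ :=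
      glib_cover ((X ×ˢ B2).image (fun q => w * q.1 - q.2))
        ((X ×ˢ B2).image (fun q => w * q.1 - q.2)) (by omega) 0
    rw [Finset.mem_image] at hv1 hv2
    obtain ⟨q1, hq1, hq1v⟩ := hv1
    obtain ⟨q2, hq2, hq2v⟩ := hv2
    rw [Finset.mem_product] at hq1 hq2
    have hkey : w * (q1.1 + q2.1) = q1.2 + q2.2 := by
      linear_combination hq1v + hq2v + hv12
    have hs0 : q1.2 + q2.2 ≠ 0 := by
      intro h0
      have h1 : -q1.2 = q2.2 := by linear_combination -h0
      exact ((hmemB2 q1.2).1 hq1.2).2 (by rw [h1]; exact ((hmemB2 q2.2).1 hq2.2).1)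
    have ht0 : q1.1 + q2.1 ≠ 0 := by
      intro h0
      rw [h0, mul_zero] at hkey
      exact hs0 hkey.symm
    have hst : q1.2 + q2.2 = w * (q1.1 + q2.1) := hkey.symm
    obtain ⟨a, ha, b, hb, a', ha', b', hb', habz⟩ :=
      glib_reach X B2 w (q1.2 + q2.2) (q1.1 + q2.1) ht0 hst hplus z
    refine ⟨![a, a, q1.1, q2.1, a', a', q1.1, q2.1],
      ![q1.2, q2.2, b, b, q1.2, q2.2, b', b'], ?_, ?_, ?_⟩
    · intro i
      fin_cases i <;> simp <;>
        first
          | exact ha | exact ha' | exact hq1.1 | exact hq2.1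
    · have hYmem : ∀ c, c ∈ B2 → c ∈ Y := fun c hc => ((hmemB2 c).1 hc).1
      intro i
      fin_cases i <;> simp <;>
        first
          | exact hYmem _ hq1.2 | exact hYmem _ hq2.2 | exact hYmem _ hb | exact hYmem _ hb'
    · rw [Fin.sum_univ_eight]
      simp only [glib_vec8_0, glib_vec8_1, glib_vec8_2, glib_vec8_3, glib_vec8_4,
        glib_vec8_5, glib_vec8_6, glib_vec8_7]
      linear_combination habz
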